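/- Assume I*₁ > 0 and I*₂ > 0, and let ε = max(α*/I*₁, 2β*/I*₂). Then C_O ⊆ C_{I,ε}; that is, C_{I,ε} is an ε-approximated capacity region. -/

import Mathlib

open scoped BigOperators

/-- `P` is a probability distribution on the finite alphabet `A`. -/
def IsDist {A : Type*} [Fintype A] (P : A → ℝ) : Prop :=
  (∀ a, 0 ≤ P a) ∧ ∑ a, P a = 1

/-- Input–output mutual information 𝓘(P, W) (in bits) of a channel `W`
from the finite alphabet `A` to the finite alphabet `B` under input distribution `P`. -/
noncomputable def mutInfo {A B : Type*} [Fintype A] [Fintype B]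
    (P : A → ℝ) (W : A → B → ℝ) : ℝ :=
  ∑ a, ∑ b, P a * W a b * Real.logb 2 (W a b / ∑ a', P a' * W a' b)

/-- Shannon entropy (base 2) of a distribution on a finite alphabet. -/
noncomputable def ent {B : Type*} [Fintype B] (Q : B → ℝ) : ℝ :=
  -∑ b, Q b * Real.logb 2 (Q b)

section TWC

variable {X1 X2 Y1 Y2 : Type*} [Fintype X1] [Fintype X2] [Fintype Y1] [Fintype Y2]

/-- A joint input distribution on `X1 × X2`. -/
def IsJointDist (P : X1 → X2 → ℝ) : Prop :=
  (∀ x1 x2, 0 ≤ P x1 x2) ∧ ∑ x1, ∑ x2, P x1 x2 = 1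

/-- Marginal of a joint input distribution on `X1`. -/
noncomputable def margin1 (P : X1 → X2 → ℝ) (x1 : X1) : ℝ := ∑ x2, P x1 x2

/-- Marginal of a joint input distribution on `X2`. -/
noncomputable def margin2 (P : X1 → X2 → ℝ) (x2 : X2) : ℝ := ∑ x1, P x1 x2

/-- Conditional distribution P_{X₁|X₂=x₂}. -/
noncomputable def cond1given2 (P : X1 → X2 → ℝ) (x2 : X2) (x1 : X1) : ℝ :=
  P x1 x2 / margin2 P x2

/-- Conditional distribution P_{X₂|X₁=x₁}. -/
noncomputable def cond2given1 (P : X1 → X2 → ℝ) (x1 : X1) (x2 : X2) : ℝ :=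
  P x1 x2 / margin1 P x1

/-- The conditional mutual information I(X₁;Y₂|X₂) under the joint input distribution `P`,
where `W2` is the marginal channel P_{Y₂|X₁,X₂}. -/
noncomputable def condMI12 (P : X1 → X2 → ℝ) (W2 : X1 → X2 → Y2 → ℝ) : ℝ :=
  ∑ x2, margin2 P x2 * mutInfo (cond1given2 P x2) (fun x1 => W2 x1 x2)

/-- The conditional mutual information I(X₂;Y₁|X₁) under the joint input distribution `P`,
where `W1` is the marginal channel P_{Y₁|X₁,X₂}. -/
noncomputable def condMI21 (P : X1 → X2 → ℝ) (W1 : X1 → X2 → Y1 → ℝ) : ℝ :=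
  ∑ x1, margin1 P x1 * mutInfo (cond2given1 P x1) (fun x2 => W1 x1 x2)

/-- The rate region 𝓡(P_{X₁,X₂}). -/
noncomputable def rateRegion (W1 : X1 → X2 → Y1 → ℝ) (W2 : X1 → X2 → Y2 → ℝ)
    (P : X1 → X2 → ℝ) : Set (ℝ × ℝ) :=
  {r | 0 ≤ r.1 ∧ r.1 ≤ condMI12 P W2 ∧ 0 ≤ r.2 ∧ r.2 ≤ condMI21 P W1}

/-- Shannon's inner bound C_I: the closure of the convex hull of the union of the
rate regions of all product input distributions. -/
noncomputable def innerBound (W1 : X1 → X2 → Y1 → ℝ) (W2 : X1 → X2 → Y2 → ℝ) :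
    Set (ℝ × ℝ) :=
  closure (convexHull ℝ
    (⋃ P ∈ {P : X1 → X2 → ℝ |
        ∃ P1 P2, IsDist P1 ∧ IsDist P2 ∧ P = fun x1 x2 => P1 x1 * P2 x2},
      rateRegion W1 W2 P))

/-- Shannon's outer bound C_O: the union of the rate regions of all joint input
distributions. -/
noncomputable def outerBound (W1 : X1 → X2 → Y1 → ℝ) (W2 : X1 → X2 → Y2 → ℝ) :
    Set (ℝ × ℝ) :=
  ⋃ P ∈ {P : X1 → X2 → ℝ | IsJointDist P}, rateRegion W1 W2 P

/-- The largest input–output mutual information of the one-way channel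
P_{Y₂|X₁,X₂=x₂}. -/
noncomputable def capAt (W2 : X1 → X2 → Y2 → ℝ) (x2 : X2) : ℝ :=
  sSup {I | ∃ P : X1 → ℝ, IsDist P ∧ I = mutInfo P (fun x1 => W2 x1 x2)}

/-- α*: how close the channels {P_{Y₂|X₁,X₂=x₂}} are to having a common optimal
input distribution. -/
noncomputable def alphaStar (W2 : X1 → X2 → Y2 → ℝ) : ℝ :=
  sInf {a | ∃ Pt : X1 → ℝ, IsDist Pt ∧
    a = ⨆ x2, |mutInfo Pt (fun x1 => W2 x1 x2) - capAt W2 x2|}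

/-- β*: the degree of invariance in the input–output mutual information of the
channels {P_{Y₁|X₁=x₁,X₂}}. -/
noncomputable def betaStar (W1 : X1 → X2 → Y1 → ℝ) : ℝ :=
  sSup {b | ∃ (P : X2 → ℝ) (x1 x1' : X1), IsDist P ∧ x1 ≠ x1' ∧
    b = |mutInfo P (fun x2 => W1 x1 x2) - mutInfo P (fun x2 => W1 x1' x2)|}

/-- I*₁ = max_{x₂} max_{P} 𝓘(P, P_{Y₂|X₁,X₂=x₂}). -/
noncomputable def IStar1 (W2 : X1 → X2 → Y2 → ℝ) : ℝ :=
  sSup {I | ∃ (x2 : X2) (P : X1 → ℝ), IsDist P ∧ I = mutInfo P (fun x1 => W2 x1 x2)}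

/-- I*₂ = max_{x₁} max_{P} 𝓘(P, P_{Y₁|X₁=x₁,X₂}). -/
noncomputable def IStar2 (W1 : X1 → X2 → Y1 → ℝ) : ℝ :=
  sSup {I | ∃ (x1 : X1) (P : X2 → ℝ), IsDist P ∧ I = mutInfo P (fun x2 => W1 x1 x2)}

/-- Condition (a): `Pstar` is a common optimal input distribution for the channels
{P_{Y₂|X₁,X₂=x₂} : x₂ ∈ 𝒳₂}. -/
def CondA (W2 : X1 → X2 → Y2 → ℝ) (Pstar : X1 → ℝ) : Prop :=
  IsDist Pstar ∧ ∀ x2 : X2, ∀ P : X1 → ℝ, IsDist P →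
    mutInfo P (fun x1 => W2 x1 x2) ≤ mutInfo Pstar (fun x1 => W2 x1 x2)

/-- Condition (b1): for every input distribution on 𝒳₂, the input–output mutual
information of P_{Y₁|X₁=x₁,X₂} does not depend on x₁. -/
def CondB1 (W1 : X1 → X2 → Y1 → ℝ) : Prop :=
  ∀ P : X2 → ℝ, IsDist P → ∀ x1 x1' : X1,
    mutInfo P (fun x2 => W1 x1 x2) = mutInfo P (fun x2 => W1 x1' x2)

/-- H(Y₁|X₁,X₂) under the joint input distribution `P`. -/
noncomputable def condEntFull (P : X1 → X2 → ℝ) (W1 : X1 → X2 → Y1 → ℝ) : ℝ :=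
  ∑ x1, ∑ x2, P x1 x2 * ent (W1 x1 x2)

/-- H(Y₁|X₁) under the joint input distribution `P`. -/
noncomputable def condEntY1X1 (P : X1 → X2 → ℝ) (W1 : X1 → X2 → Y1 → ℝ) : ℝ :=
  ∑ x1, margin1 P x1 * ent (fun y1 => ∑ x2, cond2given1 P x1 x2 * W1 x1 x2 y1)

/-- Condition (b2), part (i): H(Y₁|X₁,X₂) depends on the joint input distribution
only through its marginal on 𝒳₂. -/
def CondB2i (W1 : X1 → X2 → Y1 → ℝ) : Prop :=
  ∀ P Q : X1 → X2 → ℝ, IsJointDist P → IsJointDist Q →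
    margin2 P = margin2 Q → condEntFull P W1 = condEntFull Q W1

/-- Condition (b2), part (ii), relative to the common optimal input `Pstar`:
H⁽¹⁾(Y₁|X₁) ≤ H⁽²⁾(Y₁|X₁) where P⁽²⁾ = P*_{X₁}·P⁽¹⁾_{X₂}. -/
def CondB2ii (W1 : X1 → X2 → Y1 → ℝ) (Pstar : X1 → ℝ) : Prop :=
  ∀ P : X1 → X2 → ℝ, IsJointDist P →
    condEntY1X1 P W1 ≤ condEntY1X1 (fun x1 x2 => Pstar x1 * margin2 P x2) W1


section MyHelpers

variable {A B : Type*} [Fintype A] [Fintype B]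


lemma my_one_sub_inv_le_log {x : ℝ} (hx : 0 < x) : 1 - x⁻¹ ≤ Real.log x := by
  have h := Real.log_le_sub_one_of_pos (inv_pos.mpr hx)
  rw [Real.log_inv] at h
  linarith

lemma my_log_two_pos : (0:ℝ) < Real.log 2 := Real.log_pos one_lt_two

lemma mutInfo_nonneg {P : A → ℝ} {W : A → B → ℝ}
    (hP0 : ∀ a, 0 ≤ P a) (hP1 : ∑ a, P a = 1)
    (hW : ∀ a, IsDist (W a)) : 0 ≤ mutInfo P W := by
  classical
  set Q : B → ℝ := fun b => ∑ a', P a' * W a' b with hQdef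
  have hQ0 : ∀ b, 0 ≤ Q b := fun b =>
    Finset.sum_nonneg fun a _ => mul_nonneg (hP0 a) ((hW a).1 b)
  have key : ∀ a, ∀ b, (P a * W a b - P a * Q b) / Real.log 2
      ≤ P a * W a b * Real.logb 2 (W a b / Q b) := by
    intro a b
    by_cases hJ : P a * W a b = 0
    · rw [hJ, zero_mul]
      have h1 : 0 ≤ P a * Q b := mul_nonneg (hP0 a) (hQ0 b)
      have h2 : (0:ℝ) - P a * Q b ≤ 0 := by linarith
      exact div_nonpos_of_nonpos_of_nonneg h2 my_log_two_pos.le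
    · obtain ⟨hPne, hWne⟩ := mul_ne_zero_iff.mp hJ
      have hPa : 0 < P a := lt_of_le_of_ne (hP0 a) (Ne.symm hPne)
      have hWab : 0 < W a b := lt_of_le_of_ne ((hW a).1 b) (Ne.symm hWne)
      have hQb : 0 < Q b := lt_of_lt_of_le (mul_pos hPa hWab)
        (Finset.single_le_sum (f := fun a' => P a' * W a' b)
          (fun a' _ => mul_nonneg (hP0 a') ((hW a').1 b)) (Finset.mem_univ a))
      have hx : 0 < W a b / Q b := div_pos hWab hQb
      have hlog : 1 - Q b / W a b ≤ Real.log (W a b / Q b) := by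
        have := my_one_sub_inv_le_log hx
        rwa [inv_div] at this
      have h2 : P a * W a b * (1 - Q b / W a b) = P a * W a b - P a * Q b := by
        field_simp
      have h3 : P a * W a b * (1 - Q b / W a b) ≤ P a * W a b * Real.log (W a b / Q b) :=
        mul_le_mul_of_nonneg_left hlog (mul_nonneg hPa.le hWab.le)
      rw [Real.logb]
      calc (P a * W a b - P a * Q b) / Real.log 2
          = P a * W a b * (1 - Q b / W a b) / Real.log 2 := by rw [h2]
        _ ≤ P a * W a b * Real.log (W a b / Q b) / Real.log 2 :=
            div_le_div_of_nonneg_right (by linarith) my_log_two_pos.le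
        _ = P a * W a b * (Real.log (W a b / Q b) / Real.log 2) := by ring
  have hsum : ∑ a, ∑ b, (P a * W a b - P a * Q b) / Real.log 2 ≤ mutInfo P W :=
    Finset.sum_le_sum fun a _ => Finset.sum_le_sum fun b _ => key a b
  have hJ1 : ∑ a, ∑ b, P a * W a b = 1 := by
    have : ∀ a, ∑ b, P a * W a b = P a := by
      intro a; rw [← Finset.mul_sum, (hW a).2, mul_one]
    rw [Finset.sum_congr rfl fun a _ => this a, hP1]
  have hPQ : ∑ a, ∑ b, P a * Q b = 1 := by
    have h1 : ∑ a, ∑ b, P a * Q b = (∑ a, P a) * (∑ b, Q b) := by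
      rw [Finset.sum_mul_sum]
    have h2 : ∑ b, Q b = 1 := by
      rw [hQdef]
      rw [Finset.sum_comm]
      exact hJ1
    rw [h1, hP1, one_mul, h2]
  have hzero : ∑ a, ∑ b, (P a * W a b - P a * Q b) / Real.log 2 = 0 := by
    simp only [← Finset.sum_div, Finset.sum_sub_distrib]
    rw [hJ1, hPQ]
    simp
  linarith

lemma mutInfo_le_two_card {P : A → ℝ} {W : A → B → ℝ}
    (hP0 : ∀ a, 0 ≤ P a) (hP1 : ∑ a, P a = 1)
    (hW : ∀ a, IsDist (W a)) : mutInfo P W ≤ 2 * Fintype.card A := by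
  classical
  set Q : B → ℝ := fun b => ∑ a', P a' * W a' b with hQdef
  have hPle1 : ∀ a, P a ≤ 1 := by
    intro a
    rw [← hP1]
    exact Finset.single_le_sum (fun i _ => hP0 i) (Finset.mem_univ a)
  have key : ∀ a b, P a * W a b * Real.logb 2 (W a b / Q b)
      ≤ P a * W a b * (-Real.logb 2 (P a)) := by
    intro a b
    by_cases hJ : P a * W a b = 0
    · rw [hJ, zero_mul, zero_mul]
    · obtain ⟨hPne, hWne⟩ := mul_ne_zero_iff.mp hJ
      have hPa : 0 < P a := lt_of_le_of_ne (hP0 a) (Ne.symm hPne)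
      have hWab : 0 < W a b := lt_of_le_of_ne ((hW a).1 b) (Ne.symm hWne)
      have hQb : 0 < Q b := lt_of_lt_of_le (mul_pos hPa hWab)
        (Finset.single_le_sum (f := fun a' => P a' * W a' b)
          (fun a' _ => mul_nonneg (hP0 a') ((hW a').1 b)) (Finset.mem_univ a))
      have hle : W a b / Q b ≤ (P a)⁻¹ := by
        have h1 : W a b / Q b ≤ W a b / (P a * W a b) :=
          (div_le_div_iff_of_pos_left hWab hQb (mul_pos hPa hWab)).mpr
            (Finset.single_le_sum (f := fun a' => P a' * W a' b)
              (fun a' _ => mul_nonneg (hP0 a') ((hW a').1 b)) (Finset.mem_univ a))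
        have h2 : W a b / (P a * W a b) = (P a)⁻¹ := by
          field_simp
        linarith
      have hlogle : Real.logb 2 (W a b / Q b) ≤ -Real.logb 2 (P a) := by
        rw [← Real.logb_inv]
        exact Real.logb_le_logb_of_le one_lt_two (div_pos hWab hQb) hle
      exact mul_le_mul_of_nonneg_left hlogle (mul_nonneg (hP0 a) hWab.le)
  have step1 : mutInfo P W ≤ ∑ a, P a * (-Real.logb 2 (P a)) := by
    have h1 : mutInfo P W ≤ ∑ a, ∑ b, P a * W a b * (-Real.logb 2 (P a)) :=
      Finset.sum_le_sum fun a _ => Finset.sum_le_sum fun b _ => key a b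
    have h2 : ∀ a, ∑ b, P a * W a b * (-Real.logb 2 (P a))
        = P a * (-Real.logb 2 (P a)) := by
      intro a
      have : ∀ b, P a * W a b * (-Real.logb 2 (P a))
          = (P a * (-Real.logb 2 (P a))) * W a b := fun b => by ring
      rw [Finset.sum_congr rfl fun b _ => this b, ← Finset.mul_sum, (hW a).2, mul_one]
    calc mutInfo P W ≤ ∑ a, ∑ b, P a * W a b * (-Real.logb 2 (P a)) := h1
      _ = ∑ a, P a * (-Real.logb 2 (P a)) := Finset.sum_congr rfl fun a _ => h2 a
  have step2 : ∀ a, P a * (-Real.logb 2 (P a)) ≤ 2 := by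
    intro a
    rcases eq_or_lt_of_le (hP0 a) with h | h
    · rw [← h]; norm_num
    · have hlog2 := my_log_two_pos
      have hlb : 1 - (P a)⁻¹ ≤ Real.log (P a) := my_one_sub_inv_le_log h
      have hkey : -(P a * Real.log (P a)) ≤ 1 := by
        have := mul_le_mul_of_nonneg_left hlb (hP0 a)
        have hinv : P a * (P a)⁻¹ = 1 := mul_inv_cancel₀ (ne_of_gt h)
        nlinarith
      have h2log : (1:ℝ) ≤ 2 * Real.log 2 := by
        have := Real.log_two_gt_d9
        nlinarith
      rw [Real.logb]
      rw [show P a * -(Real.log (P a) / Real.log 2) = (-(P a * Real.log (P a))) / Real.log 2 by ring]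
      rw [div_le_iff₀ hlog2]
      nlinarith
  calc mutInfo P W ≤ ∑ a, P a * (-Real.logb 2 (P a)) := step1
    _ ≤ ∑ _a : A, (2:ℝ) := Finset.sum_le_sum fun a _ => step2 a
    _ = 2 * Fintype.card A := by
        rw [Finset.sum_const, Finset.card_univ, nsmul_eq_mul, mul_comm]


lemma mutInfo_decomp {P : A → ℝ} {W : A → B → ℝ}
    (hP0 : ∀ a, 0 ≤ P a) (hW0 : ∀ a b, 0 ≤ W a b) :
    mutInfo P W = ent (fun b => ∑ a, P a * W a b) - ∑ a, P a * ent (W a) := by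
  classical
  set Q : B → ℝ := fun b => ∑ a', P a' * W a' b with hQdef
  have key : ∀ a b, P a * W a b * Real.logb 2 (W a b / Q b)
      = P a * (W a b * Real.logb 2 (W a b)) - P a * W a b * Real.logb 2 (Q b) := by
    intro a b
    by_cases hJ : P a * W a b = 0
    · rcases mul_eq_zero.mp hJ with h | h
      · simp [h]
      · simp [h]
    · obtain ⟨hPne, hWne⟩ := mul_ne_zero_iff.mp hJ
      have hPa : 0 < P a := lt_of_le_of_ne (hP0 a) (Ne.symm hPne)
      have hWab : 0 < W a b := lt_of_le_of_ne (hW0 a b) (Ne.symm hWne)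
      have hQb : 0 < Q b := lt_of_lt_of_le (mul_pos hPa hWab)
        (Finset.single_le_sum (f := fun a' => P a' * W a' b)
          (fun a' _ => mul_nonneg (hP0 a') (hW0 a' b)) (Finset.mem_univ a))
      rw [Real.logb_div hWab.ne' hQb.ne']
      ring
  have hsum : mutInfo P W
      = (∑ a, ∑ b, P a * (W a b * Real.logb 2 (W a b)))
        - ∑ a, ∑ b, P a * W a b * Real.logb 2 (Q b) := by
    unfold mutInfo
    rw [← Finset.sum_sub_distrib]
    apply Finset.sum_congr rfl; intro a _
    rw [← Finset.sum_sub_distrib]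
    exact Finset.sum_congr rfl fun b _ => key a b
  have h1 : ∑ a, ∑ b, P a * (W a b * Real.logb 2 (W a b)) = -∑ a, P a * ent (W a) := by
    rw [← Finset.sum_neg_distrib]
    apply Finset.sum_congr rfl; intro a _
    unfold ent
    rw [← Finset.mul_sum]
    ring
  have h2 : ∑ a, ∑ b, P a * W a b * Real.logb 2 (Q b) = -ent Q := by
    rw [Finset.sum_comm]
    unfold ent
    rw [neg_neg]
    apply Finset.sum_congr rfl; intro b _
    rw [← Finset.sum_mul]
  rw [hsum, h1, h2]
  unfold ent
  ring

lemma ent_concave_mix {ι : Type*} (t : Finset ι) (w : ι → ℝ) (Qs : ι → B → ℝ)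
    (hw0 : ∀ i ∈ t, 0 ≤ w i) (hw1 : ∑ i ∈ t, w i = 1)
    (hQs0 : ∀ i ∈ t, ∀ b, 0 ≤ Qs i b) :
    ∑ i ∈ t, w i * ent (Qs i) ≤ ent (fun b => ∑ i ∈ t, w i * Qs i b) := by
  classical
  have hconc : ConcaveOn ℝ (Set.Ici (0:ℝ)) ((Real.log 2)⁻¹ • Real.negMulLog) :=
    Real.concaveOn_negMulLog.smul (by positivity)
  have hf : ∀ x : ℝ, ((Real.log 2)⁻¹ • Real.negMulLog) x = -(x * Real.logb 2 x) := by
    intro x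
    simp [Real.negMulLog, Real.logb, smul_eq_mul]
    ring
  have jensen : ∀ b, ∑ i ∈ t, w i * (-(Qs i b * Real.logb 2 (Qs i b)))
      ≤ -((∑ i ∈ t, w i * Qs i b) * Real.logb 2 (∑ i ∈ t, w i * Qs i b)) := by
    intro b
    have := hconc.le_map_sum (p := fun i => Qs i b) hw0 hw1
      (fun i hi => Set.mem_Ici.mpr (hQs0 i hi b))
    simpa only [hf, smul_eq_mul] using this
  have hentf : ∀ (Q : B → ℝ), ent Q = ∑ b, -(Q b * Real.logb 2 (Q b)) := by
    intro Q; unfold ent; rw [← Finset.sum_neg_distrib]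
  calc ∑ i ∈ t, w i * ent (Qs i)
      = ∑ b, ∑ i ∈ t, w i * (-(Qs i b * Real.logb 2 (Qs i b))) := by
        rw [Finset.sum_comm]
        exact Finset.sum_congr rfl fun i _ => by rw [hentf, Finset.mul_sum]
    _ ≤ ∑ b, -((∑ i ∈ t, w i * Qs i b) * Real.logb 2 (∑ i ∈ t, w i * Qs i b)) :=
        Finset.sum_le_sum fun b _ => jensen b
    _ = ent (fun b => ∑ i ∈ t, w i * Qs i b) := by rw [hentf]

lemma mutInfo_concave {ι : Type*} (t : Finset ι) (w : ι → ℝ) (Ps : ι → A → ℝ)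
    (W : A → B → ℝ)
    (hw0 : ∀ i ∈ t, 0 ≤ w i) (hw1 : ∑ i ∈ t, w i = 1)
    (hPs0 : ∀ i ∈ t, ∀ a, 0 ≤ Ps i a) (hW0 : ∀ a b, 0 ≤ W a b) :
    ∑ i ∈ t, w i * mutInfo (Ps i) W
      ≤ mutInfo (fun a => ∑ i ∈ t, w i * Ps i a) W := by
  classical
  have hmix0 : ∀ a, 0 ≤ ∑ i ∈ t, w i * Ps i a := fun a =>
    Finset.sum_nonneg fun i hi => mul_nonneg (hw0 i hi) (hPs0 i hi a)
  rw [mutInfo_decomp hmix0 hW0]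
  have hlhs : ∑ i ∈ t, w i * mutInfo (Ps i) W
      = ∑ i ∈ t, w i * ent (fun b => ∑ a, Ps i a * W a b)
        - ∑ i ∈ t, w i * ∑ a, Ps i a * ent (W a) := by
    rw [← Finset.sum_sub_distrib]
    apply Finset.sum_congr rfl; intro i hi
    rw [mutInfo_decomp (hPs0 i hi) hW0]
    ring
  rw [hlhs]
  have hlin : ∑ i ∈ t, w i * ∑ a, Ps i a * ent (W a)
      = ∑ a, (∑ i ∈ t, w i * Ps i a) * ent (W a) := by
    have h1 : ∀ i, w i * ∑ a, Ps i a * ent (W a) = ∑ a, w i * Ps i a * ent (W a) := by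
      intro i
      rw [Finset.mul_sum]
      exact Finset.sum_congr rfl fun a _ => by ring
    rw [Finset.sum_congr rfl fun i _ => h1 i, Finset.sum_comm]
    exact Finset.sum_congr rfl fun a _ => by rw [Finset.sum_mul]
  have hQmix : ∀ b, ∑ a, (∑ i ∈ t, w i * Ps i a) * W a b
      = ∑ i ∈ t, w i * ∑ a, Ps i a * W a b := by
    intro b
    have h1 : ∀ a, (∑ i ∈ t, w i * Ps i a) * W a b = ∑ i ∈ t, w i * (Ps i a * W a b) := by
      intro a
      rw [Finset.sum_mul]
      exact Finset.sum_congr rfl fun i _ => by ring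
    rw [Finset.sum_congr rfl fun a _ => h1 a, Finset.sum_comm]
    exact Finset.sum_congr rfl fun i _ => by rw [Finset.mul_sum]
  have hent := ent_concave_mix t w (fun i => fun b => ∑ a, Ps i a * W a b) hw0 hw1
    (fun i hi b => Finset.sum_nonneg fun a _ => mul_nonneg (hPs0 i hi a) (hW0 a b))
  have hent2 : ent (fun b => ∑ a, (∑ i ∈ t, w i * Ps i a) * W a b)
      = ent (fun b => ∑ i ∈ t, w i * ∑ a, Ps i a * W a b) := by
    congr 1
    funext b
    exact hQmix b
  rw [hlin, hent2]
  have := hent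
  linarith

end MyHelpers

section TWCHelpers

variable {X1 X2 Y1 Y2 : Type*} [Fintype X1] [Fintype X2] [Fintype Y1] [Fintype Y2]

lemma my_isDist_margin1 {P : X1 → X2 → ℝ} (hP : IsJointDist P) : IsDist (margin1 P) := by
  constructor
  · intro x1; exact Finset.sum_nonneg fun x2 _ => hP.1 x1 x2
  · unfold margin1; exact hP.2

lemma my_isDist_margin2 {P : X1 → X2 → ℝ} (hP : IsJointDist P) : IsDist (margin2 P) := by
  constructor
  · intro x2; exact Finset.sum_nonneg fun x1 _ => hP.1 x1 x2
  · unfold margin2; rw [Finset.sum_comm]; exact hP.2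

lemma my_isDist_cond1given2 {P : X1 → X2 → ℝ} (hP0 : ∀ x1 x2, 0 ≤ P x1 x2) {x2 : X2}
    (h : margin2 P x2 ≠ 0) : IsDist (cond1given2 P x2) := by
  constructor
  · intro x1
    exact div_nonneg (hP0 x1 x2) (Finset.sum_nonneg fun x1' _ => hP0 x1' x2)
  · unfold cond1given2
    rw [← Finset.sum_div]
    exact div_self h

lemma my_isDist_cond2given1 {P : X1 → X2 → ℝ} (hP0 : ∀ x1 x2, 0 ≤ P x1 x2) {x1 : X1}
    (h : margin1 P x1 ≠ 0) : IsDist (cond2given1 P x1) := by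
  constructor
  · intro x2
    exact div_nonneg (hP0 x1 x2) (Finset.sum_nonneg fun x2' _ => hP0 x1 x2')
  · unfold cond2given1
    rw [← Finset.sum_div]
    exact div_self h

lemma my_margin1_zero {P : X1 → X2 → ℝ} (hP0 : ∀ x1 x2, 0 ≤ P x1 x2) {x1 : X1}
    (h : margin1 P x1 = 0) : ∀ x2, P x1 x2 = 0 := by
  intro x2
  exact (Finset.sum_eq_zero_iff_of_nonneg (fun x2' _ => hP0 x1 x2')).mp h x2 (Finset.mem_univ x2)

lemma my_betaStar_nonneg (W1 : X1 → X2 → Y1 → ℝ) : 0 ≤ betaStar W1 :=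
  Real.sSup_nonneg fun b hb => by
    obtain ⟨Q, y, y', _, _, rfl⟩ := hb
    exact abs_nonneg _

lemma my_bridge (W1 : X1 → X2 → Y1 → ℝ) (hW1 : ∀ x1 x2, IsDist (W1 x1 x2))
    {R : X2 → ℝ} (hR : IsDist R) (x1 x1' : X1) :
    mutInfo R (fun x2 => W1 x1 x2) ≤ mutInfo R (fun x2 => W1 x1' x2) + betaStar W1 := by
  rcases eq_or_ne x1 x1' with rfl | hne
  · have := my_betaStar_nonneg W1
    linarith
  · have hbdd : BddAbove {b | ∃ (P : X2 → ℝ) (y y' : X1), IsDist P ∧ y ≠ y' ∧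
        b = |mutInfo P (fun x2 => W1 y x2) - mutInfo P (fun x2 => W1 y' x2)|} := by
      refine ⟨4 * Fintype.card X2, ?_⟩
      rintro b ⟨Q, y, y', hQ, _, rfl⟩
      have h1 := mutInfo_nonneg hQ.1 hQ.2 (fun x2 => hW1 y x2)
      have h2 := mutInfo_le_two_card hQ.1 hQ.2 (fun x2 => hW1 y x2)
      have h3 := mutInfo_nonneg hQ.1 hQ.2 (fun x2 => hW1 y' x2)
      have h4 := mutInfo_le_two_card hQ.1 hQ.2 (fun x2 => hW1 y' x2)
      rw [abs_le]
      constructor <;> nlinarith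
    have hmem : |mutInfo R (fun x2 => W1 x1 x2) - mutInfo R (fun x2 => W1 x1' x2)|
        ∈ {b | ∃ (P : X2 → ℝ) (y y' : X1), IsDist P ∧ y ≠ y' ∧
        b = |mutInfo P (fun x2 => W1 y x2) - mutInfo P (fun x2 => W1 y' x2)|} :=
      ⟨R, x1, x1', hR, hne, rfl⟩
    have hle := le_csSup hbdd hmem
    have h3 : mutInfo R (fun x2 => W1 x1 x2) - mutInfo R (fun x2 => W1 x1' x2)
        ≤ |mutInfo R (fun x2 => W1 x1 x2) - mutInfo R (fun x2 => W1 x1' x2)| := le_abs_self _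
    unfold betaStar
    linarith

end TWCHelpers


/-- with ε = max(α*/I*₁, 2β*/I*₂), the ε-neighborhood C_{I,ε} of Shannon's
inner bound contains C_O, i.e. C_{I,ε} is an ε-approximated capacity region. -/
theorem stmt14 [Nonempty X1] [Nonempty X2]
    (W1 : X1 → X2 → Y1 → ℝ) (W2 : X1 → X2 → Y2 → ℝ)
    (hW1 : ∀ x1 x2, IsDist (W1 x1 x2)) (hW2 : ∀ x1 x2, IsDist (W2 x1 x2))
    (h1 : 0 < IStar1 W2) (h2 : 0 < IStar2 W1) :
    outerBound W1 W2 ⊆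
      {r : ℝ × ℝ | r ∈ Set.Icc 0 (IStar1 W2) ×ˢ Set.Icc 0 (IStar2 W1) ∧
        ∃ r' ∈ innerBound W1 W2,
          max (|r.1 - r'.1| / IStar1 W2) (|r.2 - r'.2| / IStar2 W1) ≤
            max (alphaStar W2 / IStar1 W2) (2 * betaStar W1 / IStar2 W1)} := by
  classical
  intro r hr
  rw [outerBound] at hr
  simp only [Set.mem_iUnion, Set.mem_setOf_eq] at hr
  obtain ⟨P, hPJ, hrP⟩ := hr
  obtain ⟨hr10, hr1le, hr20, hr2le⟩ := hrP
  have hP0 := hPJ.1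
  have m2d : IsDist (margin2 P) := my_isDist_margin2 hPJ
  have m1d : IsDist (margin1 P) := my_isDist_margin1 hPJ
  have hbddcap : ∀ x2 : X2, BddAbove
      {I | ∃ Pp : X1 → ℝ, IsDist Pp ∧ I = mutInfo Pp (fun x1 => W2 x1 x2)} := by
    intro x2
    refine ⟨2 * Fintype.card X1, ?_⟩
    rintro I ⟨Pp, hPp, rfl⟩
    exact mutInfo_le_two_card hPp.1 hPp.2 (fun x1 => hW2 x1 x2)
  have hbdd1 : BddAbove
      {I | ∃ (x2 : X2) (Pp : X1 → ℝ), IsDist Pp ∧ I = mutInfo Pp (fun x1 => W2 x1 x2)} := by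
    refine ⟨2 * Fintype.card X1, ?_⟩
    rintro I ⟨x2, Pp, hPp, rfl⟩
    exact mutInfo_le_two_card hPp.1 hPp.2 (fun x1 => hW2 x1 x2)
  have hbdd2 : BddAbove
      {I | ∃ (x1 : X1) (Pp : X2 → ℝ), IsDist Pp ∧ I = mutInfo Pp (fun x2 => W1 x1 x2)} := by
    refine ⟨2 * Fintype.card X2, ?_⟩
    rintro I ⟨x1, Pp, hPp, rfl⟩
    exact mutInfo_le_two_card hPp.1 hPp.2 (fun x2 => hW1 x1 x2)
  have hc12 : condMI12 P W2 ≤ IStar1 W2 := by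
    unfold condMI12
    calc ∑ x2, margin2 P x2 * mutInfo (cond1given2 P x2) (fun x1 => W2 x1 x2)
        ≤ ∑ x2, margin2 P x2 * IStar1 W2 := by
          apply Finset.sum_le_sum
          intro x2 _
          by_cases h : margin2 P x2 = 0
          · rw [h, zero_mul, zero_mul]
          · refine mul_le_mul_of_nonneg_left ?_ (m2d.1 x2)
            exact le_csSup hbdd1 ⟨x2, cond1given2 P x2, my_isDist_cond1given2 hP0 h, rfl⟩
      _ = IStar1 W2 := by rw [← Finset.sum_mul, m2d.2, one_mul]
  have hc21 : condMI21 P W1 ≤ IStar2 W1 := by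
    unfold condMI21
    calc ∑ x1, margin1 P x1 * mutInfo (cond2given1 P x1) (fun x2 => W1 x1 x2)
        ≤ ∑ x1, margin1 P x1 * IStar2 W1 := by
          apply Finset.sum_le_sum
          intro x1 _
          by_cases h : margin1 P x1 = 0
          · rw [h, zero_mul, zero_mul]
          · refine mul_le_mul_of_nonneg_left ?_ (m1d.1 x1)
            exact le_csSup hbdd2 ⟨x1, cond2given1 P x1, my_isDist_cond2given1 hP0 h, rfl⟩
      _ = IStar2 W1 := by rw [← Finset.sum_mul, m1d.2, one_mul]
  have hα0 : 0 ≤ alphaStar W2 := Real.sInf_nonneg fun a ha => by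
    obtain ⟨Pt, _, rfl⟩ := ha
    exact Real.iSup_nonneg fun x2 => abs_nonneg _
  have hβ0 : 0 ≤ betaStar W1 := my_betaStar_nonneg W1
  have core : ∀ Pt : X1 → ℝ, IsDist Pt →
      condMI12 P W2 ≤ condMI12 (fun x1 x2 => Pt x1 * margin2 P x2) W2
          + (⨆ x2, |mutInfo Pt (fun x1 => W2 x1 x2) - capAt W2 x2|)
      ∧ condMI21 P W1 ≤ condMI21 (fun x1 x2 => Pt x1 * margin2 P x2) W1 + 2 * betaStar W1
      ∧ 0 ≤ condMI12 (fun x1 x2 => Pt x1 * margin2 P x2) W2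
      ∧ 0 ≤ condMI21 (fun x1 x2 => Pt x1 * margin2 P x2) W1 := by
    intro Pt hPt
    set Q : X1 → X2 → ℝ := fun x1 x2 => Pt x1 * margin2 P x2 with hQdef
    have hm2Q : ∀ x2, margin2 Q x2 = margin2 P x2 := by
      intro x2
      show ∑ x1, Pt x1 * margin2 P x2 = margin2 P x2
      rw [← Finset.sum_mul, hPt.2, one_mul]
    have hm1Q : ∀ x1, margin1 Q x1 = Pt x1 := by
      intro x1
      show ∑ x2, Pt x1 * margin2 P x2 = Pt x1
      rw [← Finset.mul_sum, m2d.2, mul_one]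
    have hQ12 : condMI12 Q W2 = ∑ x2, margin2 P x2 * mutInfo Pt (fun x1 => W2 x1 x2) := by
      unfold condMI12
      apply Finset.sum_congr rfl
      intro x2 _
      rw [hm2Q x2]
      by_cases h : margin2 P x2 = 0
      · rw [h, zero_mul, zero_mul]
      · congr 1
        have hc : cond1given2 Q x2 = Pt := by
          funext x1
          unfold cond1given2
          rw [hm2Q x2]
          exact mul_div_cancel_right₀ (Pt x1) h
        rw [hc]
    have hQ21term : ∀ x1, Pt x1 ≠ 0 → cond2given1 Q x1 = margin2 P := by
      intro x1 h
      funext x2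
      unfold cond2given1
      rw [hm1Q x1]
      show Pt x1 * margin2 P x2 / Pt x1 = margin2 P x2
      rw [mul_comm]
      exact mul_div_cancel_right₀ (margin2 P x2) h
    set s := ⨆ x2, |mutInfo Pt (fun x1 => W2 x1 x2) - capAt W2 x2| with hsdef
    have habs : ∀ x2, |mutInfo Pt (fun x1 => W2 x1 x2) - capAt W2 x2| ≤ s := by
      intro x2
      rw [hsdef]
      exact le_ciSup (f := fun x2 => |mutInfo Pt (fun x1 => W2 x1 x2) - capAt W2 x2|)
        ((Set.finite_range _).bddAbove) x2
    have hs0 : 0 ≤ s := le_trans (abs_nonneg _) (habs (Classical.arbitrary X2))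
    refine ⟨?_, ?_, ?_, ?_⟩
    · have hterm : ∀ x2 ∈ Finset.univ,
          margin2 P x2 * mutInfo (cond1given2 P x2) (fun x1 => W2 x1 x2)
          ≤ margin2 P x2 * (mutInfo Pt (fun x1 => W2 x1 x2) + s) := by
        intro x2 _
        by_cases h : margin2 P x2 = 0
        · rw [h, zero_mul, zero_mul]
        · refine mul_le_mul_of_nonneg_left ?_ (m2d.1 x2)
          have hcap : mutInfo (cond1given2 P x2) (fun x1 => W2 x1 x2) ≤ capAt W2 x2 :=
            le_csSup (hbddcap x2) ⟨cond1given2 P x2, my_isDist_cond1given2 hP0 h, rfl⟩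
          have h2' : capAt W2 x2 - mutInfo Pt (fun x1 => W2 x1 x2)
              ≤ |mutInfo Pt (fun x1 => W2 x1 x2) - capAt W2 x2| := by
            rw [abs_sub_comm]
            exact le_abs_self _
          have := habs x2
          linarith
      calc condMI12 P W2
          ≤ ∑ x2, margin2 P x2 * (mutInfo Pt (fun x1 => W2 x1 x2) + s) :=
            Finset.sum_le_sum hterm
        _ = ∑ x2, margin2 P x2 * mutInfo Pt (fun x1 => W2 x1 x2)
            + (∑ x2, margin2 P x2) * s := by
            rw [Finset.sum_mul, ← Finset.sum_add_distrib]
            exact Finset.sum_congr rfl fun x2 _ => by ring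
        _ = condMI12 Q W2 + s := by rw [hQ12, m2d.2, one_mul]
    · have x1s : X1 := Classical.arbitrary X1
      have step1 : condMI21 P W1 ≤ (∑ x1, margin1 P x1 *
          mutInfo (cond2given1 P x1) (fun x2 => W1 x1s x2)) + betaStar W1 := by
        have hterm : ∀ x1 ∈ Finset.univ,
            margin1 P x1 * mutInfo (cond2given1 P x1) (fun x2 => W1 x1 x2)
            ≤ margin1 P x1 * (mutInfo (cond2given1 P x1) (fun x2 => W1 x1s x2)
              + betaStar W1) := by
          intro x1 _
          by_cases h : margin1 P x1 = 0
          · rw [h, zero_mul, zero_mul]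
          · exact mul_le_mul_of_nonneg_left
              (my_bridge W1 hW1 (my_isDist_cond2given1 hP0 h) x1 x1s) (m1d.1 x1)
        calc condMI21 P W1
            ≤ ∑ x1, margin1 P x1 * (mutInfo (cond2given1 P x1) (fun x2 => W1 x1s x2)
                + betaStar W1) := Finset.sum_le_sum hterm
          _ = (∑ x1, margin1 P x1 * mutInfo (cond2given1 P x1) (fun x2 => W1 x1s x2))
              + (∑ x1, margin1 P x1) * betaStar W1 := by
              rw [Finset.sum_mul, ← Finset.sum_add_distrib]
              exact Finset.sum_congr rfl fun x1 _ => by ring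
          _ = _ := by rw [m1d.2, one_mul]
      have hmix : (fun x2 => ∑ x1, margin1 P x1 * cond2given1 P x1 x2) = margin2 P := by
        funext x2
        unfold margin2
        apply Finset.sum_congr rfl
        intro x1 _
        by_cases h : margin1 P x1 = 0
        · rw [h, zero_mul, my_margin1_zero hP0 h x2]
        · unfold cond2given1
          rw [mul_comm]
          exact div_mul_cancel₀ (P x1 x2) h
      have step2 : ∑ x1, margin1 P x1 * mutInfo (cond2given1 P x1) (fun x2 => W1 x1s x2)
          ≤ mutInfo (margin2 P) (fun x2 => W1 x1s x2) := by
        have hcc := mutInfo_concave Finset.univ (margin1 P) (cond2given1 P)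
          (fun x2 => W1 x1s x2)
          (fun x1 _ => m1d.1 x1) m1d.2
          (fun x1 _ x2 => div_nonneg (hP0 x1 x2) (Finset.sum_nonneg fun x2' _ => hP0 x1 x2'))
          (fun x2 y1 => (hW1 x1s x2).1 y1)
        rwa [hmix] at hcc
      have step4 : mutInfo (margin2 P) (fun x2 => W1 x1s x2) - betaStar W1
          ≤ condMI21 Q W1 := by
        have hterm : ∀ x1 ∈ Finset.univ,
            Pt x1 * (mutInfo (margin2 P) (fun x2 => W1 x1s x2) - betaStar W1)
            ≤ margin1 Q x1 * mutInfo (cond2given1 Q x1) (fun x2 => W1 x1 x2) := by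
          intro x1 _
          rw [hm1Q x1]
          by_cases h : Pt x1 = 0
          · rw [h, zero_mul, zero_mul]
          · refine mul_le_mul_of_nonneg_left ?_ (hPt.1 x1)
            rw [hQ21term x1 h]
            have := my_bridge W1 hW1 m2d x1s x1
            linarith
        calc mutInfo (margin2 P) (fun x2 => W1 x1s x2) - betaStar W1
            = ∑ x1, Pt x1 * (mutInfo (margin2 P) (fun x2 => W1 x1s x2) - betaStar W1) := by
              rw [← Finset.sum_mul, hPt.2, one_mul]
          _ ≤ ∑ x1, margin1 Q x1 * mutInfo (cond2given1 Q x1) (fun x2 => W1 x1 x2) :=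
              Finset.sum_le_sum hterm
          _ = condMI21 Q W1 := rfl
      linarith
    · rw [hQ12]
      apply Finset.sum_nonneg
      intro x2 _
      exact mul_nonneg (m2d.1 x2) (mutInfo_nonneg hPt.1 hPt.2 (fun x1 => hW2 x1 x2))
    · apply Finset.sum_nonneg
      intro x1 _
      rw [hm1Q x1]
      by_cases h : Pt x1 = 0
      · rw [h, zero_mul]
      · refine mul_nonneg (hPt.1 x1) ?_
        rw [hQ21term x1 h]
        exact mutInfo_nonneg m2d.1 m2d.2 (fun x2 => hW1 x1 x2)
  refine ⟨Set.mem_prod.mpr ⟨Set.mem_Icc.mpr ⟨hr10, hr1le.trans hc12⟩,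
    Set.mem_Icc.mpr ⟨hr20, hr2le.trans hc21⟩⟩, ?_⟩
  refine ⟨(max (r.1 - alphaStar W2) 0, max (r.2 - 2 * betaStar W1) 0), ?_, ?_⟩
  · unfold innerBound
    rw [Metric.mem_closure_iff]
    intro ε hε
    have hne : Set.Nonempty {a | ∃ Pt : X1 → ℝ, IsDist Pt ∧
        a = ⨆ x2, |mutInfo Pt (fun x1 => W2 x1 x2) - capAt W2 x2|} := by
      refine ⟨_, fun _ => (Fintype.card X1 : ℝ)⁻¹, ⟨fun _ => by positivity, ?_⟩, rfl⟩
      rw [Finset.sum_const, Finset.card_univ, nsmul_eq_mul, mul_inv_cancel₀]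
      exact_mod_cast Fintype.card_ne_zero
    obtain ⟨a, ⟨Pt, hPt, rfl⟩, ha⟩ := Real.lt_sInf_add_pos hne (half_pos hε)
    have halpha : sInf {a | ∃ Pt : X1 → ℝ, IsDist Pt ∧
        a = ⨆ x2, |mutInfo Pt (fun x1 => W2 x1 x2) - capAt W2 x2|} = alphaStar W2 := rfl
    rw [halpha] at ha
    obtain ⟨h12, h21, h12n, h21n⟩ := core Pt hPt
    refine ⟨(max (r.1 - alphaStar W2 - ε/2) 0, max (r.2 - 2 * betaStar W1) 0), ?_, ?_⟩
    · apply subset_convexHull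
      refine Set.mem_biUnion ⟨Pt, margin2 P, hPt, m2d, rfl⟩ ?_
      refine ⟨le_max_right _ _, ?_, le_max_right _ _, ?_⟩
      · exact max_le (by linarith) h12n
      · exact max_le (by linarith) h21n
    · rw [Prod.dist_eq]
      simp only [Real.dist_eq]
      apply max_lt
      · have habs2 := abs_max_sub_max_le_abs (r.1 - alphaStar W2) (r.1 - alphaStar W2 - ε/2) 0
        have heq : |r.1 - alphaStar W2 - (r.1 - alphaStar W2 - ε/2)| = ε/2 := by
          rw [show r.1 - alphaStar W2 - (r.1 - alphaStar W2 - ε/2) = ε/2 by ring]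
          exact abs_of_pos (half_pos hε)
        rw [heq] at habs2
        linarith
      · simpa using hε
  · have h1' : |r.1 - max (r.1 - alphaStar W2) 0| ≤ alphaStar W2 := by
      have ha1 := le_max_left (r.1 - alphaStar W2) 0
      have hb1 := max_le (by linarith : r.1 - alphaStar W2 ≤ r.1) hr10
      rw [abs_le]
      constructor <;> linarith
    have h2' : |r.2 - max (r.2 - 2 * betaStar W1) 0| ≤ 2 * betaStar W1 := by
      have ha1 := le_max_left (r.2 - 2 * betaStar W1) 0
      have hb1 := max_le (by linarith : r.2 - 2 * betaStar W1 ≤ r.2) hr20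
      rw [abs_le]
      constructor <;> linarith
    exact max_le_max (div_le_div_of_nonneg_right h1' h1.le) (div_le_div_of_nonneg_right h2' h2.le)


end TWC
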